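/- Let c > 0 be a real number. There exists a constant C > 0 (depending only on c) such that for every natural number T ≥ 2, the sum ∑_{k=1}^{T} (1/k)·exp(−c·(√T − √k)) ≤ 4/(c·√T) + C/T. -/

import Mathlib

open Finset Real

private lemma pow4_le_exp {x : ℝ} (hx : 0 ≤ x) : x ^ 4 ≤ 256 * Real.exp x := by
  have h := Real.add_one_le_exp (x / 4)
  have h2 : x / 4 ≤ Real.exp (x / 4) := by linarith
  have h3 : (x / 4) ^ 4 ≤ (Real.exp (x / 4)) ^ 4 :=
    pow_le_pow_left₀ (by positivity) h2 4
  have h4 : (Real.exp (x / 4)) ^ 4 = Real.exp x := by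
    rw [← Real.exp_nat_mul]; congr 1; push_cast; ring
  nlinarith [h3, h4]

private lemma geom_bound {r : ℝ} (h0 : 0 ≤ r) (h1 : r < 1) (n : ℕ) :
    ∑ j ∈ Finset.range n, r ^ j ≤ 1 / (1 - r) := by
  have hne : r ≠ 1 := ne_of_lt h1
  rw [geom_sum_eq hne,
    show (r ^ n - 1) / (r - 1) = (1 - r ^ n) / (1 - r) by rw [← neg_div_neg_eq]; ring_nf]
  have hrn : (0:ℝ) ≤ r ^ n := pow_nonneg h0 n
  exact div_le_div₀ (by norm_num) (by linarith) (by linarith) le_rfl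

set_option maxHeartbeats 1000000 in
theorem sqrt_exp_weighted_sum_bound (c : ℝ) (hc : 0 < c) :
    ∃ C : ℝ, 0 < C ∧ ∀ T : ℕ, 2 ≤ T →
      ∑ k ∈ Finset.Icc 1 T, (1 / (k : ℝ)) * Real.exp (-c * (Real.sqrt T - Real.sqrt k))
        ≤ 4 / (c * Real.sqrt T) + C / T := by
  have hs2 : Real.sqrt 2 < 2 := by
    nlinarith [Real.sq_sqrt (by norm_num : (0:ℝ) ≤ 2), Real.sqrt_nonneg 2]
  have hs2' : (0:ℝ) < Real.sqrt 2 := Real.sqrt_pos.mpr (by norm_num)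
  set a : ℝ := c * (1 - Real.sqrt 2 / 2) with ha_def
  have ha : 0 < a := by apply mul_pos hc; linarith
  refine ⟨2 + 256 / a ^ 4, by positivity, ?_⟩
  intro T hT
  set m : ℕ := T / 2 with hm_def
  have hmT : m ≤ T := Nat.div_le_self T 2
  have hT0 : (0:ℝ) < (T:ℝ) := by exact_mod_cast (by omega : 0 < T)
  have hsT : (0:ℝ) < Real.sqrt T := Real.sqrt_pos.mpr hT0
  have hsTsq : Real.sqrt T * Real.sqrt T = (T:ℝ) := Real.mul_self_sqrt hT0.le
  -- split the sum
  have hsplit :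
      ∑ k ∈ Finset.Icc 1 T, (1 / (k : ℝ)) * Real.exp (-c * (Real.sqrt T - Real.sqrt k))
        = (∑ k ∈ Finset.Ioc 0 m, (1 / (k : ℝ)) * Real.exp (-c * (Real.sqrt T - Real.sqrt k)))
          + ∑ k ∈ Finset.Ioc m T, (1 / (k : ℝ)) * Real.exp (-c * (Real.sqrt T - Real.sqrt k)) := by
    rw [show Finset.Icc 1 T = Finset.Ioc 0 T from (by ext x; simp only [Finset.mem_Icc, Finset.mem_Ioc]; omega)]
    exact (Finset.sum_Ioc_consecutive _ (Nat.zero_le m) hmT).symm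
  rw [hsplit]
  -- Part 1: small k
  have part1 :
      (∑ k ∈ Finset.Ioc 0 m, (1 / (k : ℝ)) * Real.exp (-c * (Real.sqrt T - Real.sqrt k)))
        ≤ 256 / a ^ 4 / T := by
    have hterm : ∀ k ∈ Finset.Ioc 0 m,
        (1 / (k : ℝ)) * Real.exp (-c * (Real.sqrt T - Real.sqrt k))
          ≤ Real.exp (-(a * Real.sqrt T)) := by
      intro k hk
      rw [Finset.mem_Ioc] at hk
      have hk1 : (1:ℝ) ≤ (k:ℝ) := by exact_mod_cast hk.1
      have hkT2 : (k:ℝ) ≤ (T:ℝ) / 2 := by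
        have : (2:ℝ) * k ≤ T := by exact_mod_cast (by omega : 2 * k ≤ T)
        linarith
      have hsk : Real.sqrt k ≤ Real.sqrt T * (Real.sqrt 2 / 2) := by
        have h1 : Real.sqrt k ≤ Real.sqrt ((T:ℝ)/2) := Real.sqrt_le_sqrt hkT2
        have h2 : Real.sqrt ((T:ℝ)/2) = Real.sqrt T / Real.sqrt 2 := Real.sqrt_div hT0.le 2
        have hs22 : Real.sqrt 2 * Real.sqrt 2 = 2 :=
          Real.mul_self_sqrt (by norm_num)
        have h3 : Real.sqrt T / Real.sqrt 2 = Real.sqrt T * (Real.sqrt 2 / 2) := by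
          rw [div_eq_iff (ne_of_gt hs2')]
          nlinarith [hs22]
        linarith
      have hexp : Real.exp (-c * (Real.sqrt T - Real.sqrt k))
          ≤ Real.exp (-(a * Real.sqrt T)) := by
        apply Real.exp_le_exp.mpr
        have hkey : a * Real.sqrt T ≤ c * (Real.sqrt T - Real.sqrt k) := by
          rw [ha_def]
          nlinarith [mul_nonneg hc.le (sub_nonneg.mpr hsk)]
        linarith
      calc (1 / (k : ℝ)) * Real.exp (-c * (Real.sqrt T - Real.sqrt k))
          ≤ 1 * Real.exp (-c * (Real.sqrt T - Real.sqrt k)) := by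
            apply mul_le_mul_of_nonneg_right _ (Real.exp_nonneg _)
            rw [div_le_one (by linarith)]; exact hk1
        _ = Real.exp (-c * (Real.sqrt T - Real.sqrt k)) := one_mul _
        _ ≤ Real.exp (-(a * Real.sqrt T)) := hexp
    calc (∑ k ∈ Finset.Ioc 0 m, (1 / (k : ℝ)) * Real.exp (-c * (Real.sqrt T - Real.sqrt k)))
        ≤ ∑ _k ∈ Finset.Ioc 0 m, Real.exp (-(a * Real.sqrt T)) := Finset.sum_le_sum hterm
      _ = (m : ℝ) * Real.exp (-(a * Real.sqrt T)) := by
          rw [Finset.sum_const, Nat.card_Ioc]; simp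
      _ ≤ (T : ℝ) * Real.exp (-(a * Real.sqrt T)) := by
          apply mul_le_mul_of_nonneg_right _ (Real.exp_nonneg _)
          exact_mod_cast hmT
      _ ≤ 256 / a ^ 4 / T := by
          have hx : (a * Real.sqrt T) ^ 4 ≤ 256 * Real.exp (a * Real.sqrt T) :=
            pow4_le_exp (by positivity)
          have hpow : (a * Real.sqrt T) ^ 4 = a ^ 4 * (T:ℝ)^2 := by
            rw [mul_pow]
            congr 1
            nlinarith [hsTsq]
          have hE := Real.exp_pos (a * Real.sqrt T)
          have hx2 : a ^ 4 * (T:ℝ) ^ 2 ≤ 256 * Real.exp (a * Real.sqrt T) := hpow ▸ hx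
          rw [Real.exp_neg, ← div_eq_mul_inv, div_div,
            div_le_div_iff₀ hE (by positivity)]
          nlinarith [hx2]
  -- Part 2: large k
  have part2 :
      (∑ k ∈ Finset.Ioc m T, (1 / (k : ℝ)) * Real.exp (-c * (Real.sqrt T - Real.sqrt k)))
        ≤ 4 / (c * Real.sqrt T) + 2 / T := by
    set r : ℝ := Real.exp (-(c / (2 * Real.sqrt T))) with hr_def
    have hr0 : 0 ≤ r := Real.exp_nonneg _
    have hr1 : r < 1 := by
      rw [hr_def, Real.exp_lt_one_iff]
      have : 0 < c / (2 * Real.sqrt T) := by positivity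
      linarith
    have hterm : ∀ k ∈ Finset.Ioc m T,
        (1 / (k : ℝ)) * Real.exp (-c * (Real.sqrt T - Real.sqrt k))
          ≤ (2 / T) * r ^ (T - k) := by
      intro k hk
      rw [Finset.mem_Ioc] at hk
      have hk1 : 1 ≤ k := by omega
      have hkpos : (0:ℝ) < (k:ℝ) := by exact_mod_cast hk1
      have h2k : (T:ℝ) ≤ 2 * (k:ℝ) := by exact_mod_cast (by omega : T ≤ 2 * k)
      have hkT : (k:ℝ) ≤ (T:ℝ) := by exact_mod_cast hk.2
      have hfrac : 1 / (k:ℝ) ≤ 2 / T := by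
        rw [div_le_div_iff₀ hkpos hT0]; linarith
      have hsk : Real.sqrt k ≤ Real.sqrt T := Real.sqrt_le_sqrt hkT
      have hsq : Real.sqrt k * Real.sqrt k = (k:ℝ) := Real.mul_self_sqrt hkpos.le
      have hgap : ((T:ℝ) - k) / (2 * Real.sqrt T) ≤ Real.sqrt T - Real.sqrt k := by
        rw [div_le_iff₀ (by positivity)]
        nlinarith
      have hexp : Real.exp (-c * (Real.sqrt T - Real.sqrt k)) ≤ r ^ (T - k) := by
        rw [hr_def, ← Real.exp_nat_mul]
        apply Real.exp_le_exp.mpr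
        have hcast : ((T - k : ℕ) : ℝ) = (T:ℝ) - k := by
          rw [Nat.cast_sub hk.2]
        rw [hcast]
        have h1 : c * (((T:ℝ) - k) / (2 * Real.sqrt T)) ≤ c * (Real.sqrt T - Real.sqrt k) :=
          mul_le_mul_of_nonneg_left hgap hc.le
        have h2 : ((T:ℝ) - k) * -(c / (2 * Real.sqrt T))
            = -(c * (((T:ℝ) - k) / (2 * Real.sqrt T))) := by ring
        rw [h2]
        linarith
      calc (1 / (k : ℝ)) * Real.exp (-c * (Real.sqrt T - Real.sqrt k))
          ≤ (2 / T) * Real.exp (-c * (Real.sqrt T - Real.sqrt k)) :=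
            mul_le_mul_of_nonneg_right hfrac (Real.exp_nonneg _)
        _ ≤ (2 / T) * r ^ (T - k) :=
            mul_le_mul_of_nonneg_left hexp (by positivity)
    have hgsum : ∑ k ∈ Finset.Ioc m T, r ^ (T - k) ≤ 1 / (1 - r) := by
      have himg : ∑ k ∈ Finset.Ioc m T, r ^ (T - k)
          = ∑ j ∈ (Finset.Ioc m T).image (fun k => T - k), r ^ j := by
        rw [Finset.sum_image]
        intro x hx y hy hxy
        rw [Finset.mem_coe, Finset.mem_Ioc] at hx hy
        simp only at hxy
        omega
      rw [himg]
      calc ∑ j ∈ (Finset.Ioc m T).image (fun k => T - k), r ^ j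
          ≤ ∑ j ∈ Finset.range (T + 1), r ^ j := by
            apply Finset.sum_le_sum_of_subset_of_nonneg
            · intro j hj
              rw [Finset.mem_image] at hj
              obtain ⟨k, hk, rfl⟩ := hj
              rw [Finset.mem_range]; omega
            · intro j _ _; exact pow_nonneg hr0 j
        _ ≤ 1 / (1 - r) := geom_bound hr0 hr1 (T + 1)
    have hinv : 1 / (1 - r) ≤ 2 * Real.sqrt T / c + 1 := by
      set x : ℝ := c / (2 * Real.sqrt T) with hx_def
      have hx0 : 0 < x := by positivity
      have hxe : x + 1 ≤ Real.exp x := Real.add_one_le_exp x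
      have hrx : r = Real.exp (-x) := by rw [hr_def]
      have hrle : r ≤ 1 / (x + 1) := by
        rw [hrx, Real.exp_neg, inv_eq_one_div]
        exact one_div_le_one_div_of_le (by linarith) hxe
      have h1r : x / (x + 1) ≤ 1 - r := by
        have : 1 - 1 / (x + 1) = x / (x + 1) := by field_simp; ring
        linarith [hrle]
      have h1r0 : 0 < 1 - r := by linarith
      have hfin : 1 / (1 - r) ≤ (x + 1) / x := by
        rw [div_le_div_iff₀ h1r0 hx0]
        have := h1r
        rw [div_le_iff₀ (by linarith : (0:ℝ) < x + 1)] at this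
        nlinarith
      have hxinv : (x + 1) / x = 2 * Real.sqrt T / c + 1 := by
        rw [hx_def]; field_simp; ring
      linarith [hfin, hxinv.le]
    calc (∑ k ∈ Finset.Ioc m T, (1 / (k : ℝ)) * Real.exp (-c * (Real.sqrt T - Real.sqrt k)))
        ≤ ∑ k ∈ Finset.Ioc m T, (2 / T) * r ^ (T - k) := Finset.sum_le_sum hterm
      _ = (2 / T) * ∑ k ∈ Finset.Ioc m T, r ^ (T - k) := by rw [Finset.mul_sum]
      _ ≤ (2 / T) * (2 * Real.sqrt T / c + 1) := by
          apply mul_le_mul_of_nonneg_left _ (by positivity)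
          exact hgsum.trans hinv
      _ = 4 / (c * Real.sqrt T) + 2 / T := by
          have hsq : Real.sqrt T ^ 2 = (T:ℝ) := Real.sq_sqrt hT0.le
          field_simp
          linear_combination 4 * hsq
  have : (2 + 256 / a ^ 4) / (T:ℝ) = 2 / T + 256 / a ^ 4 / T := by ring
  rw [this]
  linarith [part1, part2]
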